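/- Let p be a prime and A, B ⊆ F_p be two sets with |A|·|B| > p. Suppose that B = −B or B ∩ (−B) = ∅. Then every element of F_p can be written as a₁b₁ + a₂b₂ + ⋯ + a₈b₈ with a₁,…,a₈ ∈ A and b₁,…,b₈ ∈ B; that is, 8AB = F_p. -/

import Mathlib

open Finset Pointwise

private lemma cs_aux {γ K : Type*} [DecidableEq γ] [DecidableEq K]
    (T : Finset γ) (f : γ → K) :
    T.card ^ 2 ≤ (T.image f).card * ((T ×ˢ T).filter fun q => f q.1 = f q.2).card := by
  classical
  have hfib : T.card = ∑ z ∈ T.image f, (T.filter fun t => f t = z).card :=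
    Finset.card_eq_sum_card_fiberwise fun x hx => Finset.mem_image_of_mem f hx
  have hmaps : ∀ q ∈ (T ×ˢ T).filter fun q => f q.1 = f q.2,
      (fun q : γ × γ => f q.1) q ∈ T.image f := by
    intro q hq
    simp only [Finset.mem_filter, Finset.mem_product] at hq
    exact Finset.mem_image_of_mem f hq.1.1
  have hpairs : ((T ×ˢ T).filter fun q => f q.1 = f q.2).card
      = ∑ z ∈ T.image f, (T.filter fun t => f t = z).card ^ 2 := by
    rw [Finset.card_eq_sum_card_fiberwise hmaps]
    refine Finset.sum_congr rfl fun z _ => ?_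
    have hset : ((T ×ˢ T).filter (fun q => f q.1 = f q.2)).filter (fun q : γ × γ => f q.1 = z)
        = (T.filter fun t => f t = z) ×ˢ (T.filter fun t => f t = z) := by
      ext ⟨t₁, t₂⟩
      simp only [Finset.mem_filter, Finset.mem_product, Finset.filter_filter]
      constructor
      · rintro ⟨⟨h1, h2⟩, h3, h4⟩
        exact ⟨⟨h1, h4⟩, h2, h3 ▸ h4⟩
      · rintro ⟨⟨h1, h4⟩, h2, h5⟩
        exact ⟨⟨h1, h2⟩, h4.trans h5.symm, h4⟩
    rw [hset, Finset.card_product, sq]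
  have key : ((∑ z ∈ T.image f, ((T.filter fun t => f t = z).card : ℤ)))^2
      ≤ (T.image f).card * ∑ z ∈ T.image f, ((T.filter fun t => f t = z).card : ℤ)^2 :=
    sq_sum_le_card_mul_sum_sq
  have hfin : ((T.card : ℤ))^2 ≤ ((T.image f).card : ℤ) *
      (((T ×ˢ T).filter fun q => f q.1 = f q.2).card : ℤ) := by
    rw [hfib, hpairs]
    push_cast
    exact key
  exact_mod_cast hfin

private def Dset (p : ℕ) (A B : Finset (ZMod p)) (ζ : ZMod p) :
    Finset (((ZMod p) × (ZMod p)) × ((ZMod p) × (ZMod p))) :=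
  ((A ×ˢ B) ×ˢ (A ×ˢ B)).filter fun q =>
    q.1.1 + ζ * q.1.2 = q.2.1 + ζ * q.2.2 ∧ ¬ q.1.2 = q.2.2

private lemma energy_split (p : ℕ) (A B : Finset (ZMod p)) (ζ : ZMod p) :
    (((A ×ˢ B) ×ˢ (A ×ˢ B)).filter fun q =>
      q.1.1 + ζ * q.1.2 = q.2.1 + ζ * q.2.2).card
      = A.card * B.card + (Dset p A B ζ).card := by
  classical
  set E := ((A ×ˢ B) ×ˢ (A ×ˢ B)).filter fun q =>
      q.1.1 + ζ * q.1.2 = q.2.1 + ζ * q.2.2 with hE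
  have hsplit := Finset.card_filter_add_card_filter_not
    (s := E) (p := fun q => q.1.2 = q.2.2)
  have h1 : E.filter (fun q => q.1.2 = q.2.2) =
      (A ×ˢ B).image (fun u => (u, u)) := by
    ext q
    simp only [hE, Finset.mem_filter, Finset.mem_product, Finset.mem_image]
    constructor
    · rintro ⟨⟨⟨⟨hα, hβ⟩, hα', hβ'⟩, heq⟩, hb⟩
      refine ⟨q.1, ⟨hα, hβ⟩, ?_⟩
      have h2 := heq
      rw [hb] at h2
      have h3 : q.1.1 = q.2.1 := add_right_cancel h2
      exact Prod.ext_iff.mpr ⟨rfl, Prod.ext_iff.mpr ⟨h3, hb⟩⟩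
    · rintro ⟨u, hu, rfl⟩
      exact ⟨⟨⟨hu, hu⟩, rfl⟩, rfl⟩
  have h2 : E.filter (fun q => ¬ q.1.2 = q.2.2) = Dset p A B ζ := by
    simp only [hE, Dset, Finset.filter_filter]
  have h3 : ((A ×ˢ B).image (fun u => (u, u))).card = A.card * B.card := by
    rw [Finset.card_image_of_injective _ (fun u v huv => by
      simpa [Prod.mk.injEq] using congrArg Prod.fst huv), Finset.card_product]
  rw [h1, h2, h3] at hsplit
  omega

private lemma dset_neg_le (p : ℕ) [Fact p.Prime] (A B : Finset (ZMod p)) (ζ : ZMod p) :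
    (Dset p A B (-ζ)).card ≤ (Dset p A B ζ).card := by
  classical
  apply Finset.card_le_card_of_injOn (fun q => ((q.1.1, q.2.2), (q.2.1, q.1.2)))
  · rintro ⟨⟨α, β⟩, ⟨α', β'⟩⟩ hq
    simp only [Finset.mem_coe, Dset, Finset.mem_filter, Finset.mem_product] at hq ⊢
    obtain ⟨⟨⟨hα, hβ⟩, hα', hβ'⟩, heq, hne⟩ := hq
    refine ⟨⟨⟨hα, hβ'⟩, hα', hβ⟩, by linear_combination heq, fun h => hne h.symm⟩
  · rintro ⟨⟨α, β⟩, ⟨α', β'⟩⟩ _ ⟨⟨γ, δ⟩, ⟨γ', δ'⟩⟩ _ h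
    simp only [Prod.mk.injEq] at h
    obtain ⟨⟨h1, h2⟩, h3, h4⟩ := h
    simp [h1, h2, h3, h4, Prod.ext_iff]

private lemma dset_sum_le (p : ℕ) [Fact p.Prime] (A B : Finset (ZMod p)) :
    ∑ ζ ∈ (Finset.univ \ {0} : Finset (ZMod p)), (Dset p A B ζ).card
      ≤ (A.offDiag ×ˢ B.offDiag).card := by
  classical
  rw [← Finset.card_sigma]
  apply Finset.card_le_card_of_injOn
      (fun s => ((s.2.1.1, s.2.2.1), (s.2.1.2, s.2.2.2)))
  · rintro ⟨ζ, ⟨⟨α, β⟩, ⟨α', β'⟩⟩⟩ hq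
    simp only [Finset.mem_coe, Finset.mem_sigma, Finset.mem_sdiff, Finset.mem_singleton, Dset,
      Finset.mem_filter, Finset.mem_product] at hq
    obtain ⟨⟨_, hζ⟩, ⟨⟨hα, hβ⟩, hα', hβ'⟩, heq, hne⟩ := hq
    simp only [Finset.mem_coe, Finset.mem_product, Finset.mem_offDiag]
    refine ⟨⟨hα, hα', fun h => ?_⟩, hβ, hβ', hne⟩
    apply hne
    have h2 : ζ * β = ζ * β' := by
      have h3 := heq
      rw [h] at h3
      exact add_left_cancel h3
    exact mul_left_cancel₀ hζ h2
  · rintro ⟨ζ, ⟨⟨α, β⟩, ⟨α', β'⟩⟩⟩ hq ⟨ζ', ⟨⟨γ, δ⟩, ⟨γ', δ'⟩⟩⟩ hq' h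
    dsimp only at h
    simp only [Prod.mk.injEq] at h
    obtain ⟨⟨e1, e2⟩, e3, e4⟩ := h
    subst e1; subst e2; subst e3; subst e4
    simp only [Finset.mem_coe, Finset.mem_sigma, Finset.mem_sdiff, Finset.mem_singleton, Dset,
      Finset.mem_filter, Finset.mem_product] at hq hq'
    obtain ⟨⟨_, hζ⟩, _, heq, hne⟩ := hq
    obtain ⟨⟨_, hζ'⟩, _, heq', _⟩ := hq'
    have hbb : (β : ZMod p) - β' ≠ 0 := sub_ne_zero_of_ne hne
    have hζζ : ζ = ζ' := mul_right_cancel₀ hbb (by linear_combination heq - heq')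
    subst hζζ
    rfl

private lemma key_numeric (p a b : ℕ) (hp2 : 2 ≤ p) (ha2 : 2 ≤ a) (hb2 : 2 ≤ b)
    (hap : a ≤ p) (hbp : b ≤ p) (hn : p + 1 ≤ a * b) :
    (p + 1) * ((p - 1) * (a * b) + (a * a - a) * (b * b - b))
      ≤ 2 * (a * b) ^ 2 * (p - 1) := by
  have haa : a ≤ a * a := Nat.le_mul_of_pos_left a (by omega)
  have hbb : b ≤ b * b := Nat.le_mul_of_pos_left b (by omega)
  rcases eq_or_lt_of_le hp2 with h2 | hp3
  · subst h2
    have ha : a = 2 := le_antisymm hap ha2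
    have hb : b = 2 := le_antisymm hbp hb2
    subst ha; subst hb
    omega
  · have hp3' : 3 ≤ p := hp3
    zify [haa, hbb, (by omega : 1 ≤ p)]
    have hn' : (p : ℤ) + 1 ≤ (a : ℤ) * b := by exact_mod_cast hn
    have t1 : ((p : ℤ) + 1) * ((p : ℤ) - 3) ≤ ((a : ℤ) * b) * ((p : ℤ) - 3) := by
      apply mul_le_mul_of_nonneg_right hn'
      have h3 : (3 : ℤ) ≤ (p : ℤ) := by exact_mod_cast hp3'
      linarith
    have t2 : ((p : ℤ) + 1) * 4 ≤ ((p : ℤ) + 1) * ((a : ℤ) + b) := by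
      apply mul_le_mul_of_nonneg_left
      · have h4 : (2:ℤ) ≤ a := by exact_mod_cast ha2
        have h5 : (2:ℤ) ≤ b := by exact_mod_cast hb2
        linarith
      · positivity
    have hb0 : (0:ℤ) ≤ (a:ℤ) * b := by positivity
    nlinarith [t1, t2, mul_le_mul_of_nonneg_left t1 hb0, mul_le_mul_of_nonneg_left t2 hb0]

private lemma cover_lemma {p : ℕ} [NeZero p] (S : Finset (ZMod p))
    (hS : p < 2 * S.card) (y : ZMod p) :
    ∃ u ∈ S, ∃ v ∈ S, u + v = y := by
  classical
  by_contra hcon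
  push_neg at hcon
  have hdisj : Disjoint S (S.image fun u => y - u) := by
    rw [Finset.disjoint_left]
    rintro z hz hz2
    obtain ⟨u, hu, rfl⟩ := Finset.mem_image.1 hz2
    exact hcon u hu (y - u) hz (by ring)
  have h3 : (S.image fun u => y - u).card = S.card :=
    Finset.card_image_of_injective _ fun u v huv => sub_right_injective huv
  have h1 := Finset.card_union_of_disjoint hdisj
  have h2 : (S ∪ S.image fun u => y - u).card ≤ p := by
    exact le_trans (Finset.card_le_univ _) (le_of_eq (ZMod.card p))
  omega

private lemma pigeon_rep {p : ℕ} [NeZero p] (A B : Finset (ZMod p))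
    (hcard : p < A.card * B.card) (ζ : ZMod p) :
    ∃ α₁ ∈ A, ∃ α₂ ∈ A, ∃ β₁ ∈ B, ∃ β₂ ∈ B,
      β₁ ≠ β₂ ∧ α₁ - α₂ = ζ * (β₁ - β₂) := by
  classical
  have hlt : (Finset.univ : Finset (ZMod p)).card < (A ×ˢ B).card := by
    rw [Finset.card_univ, ZMod.card, Finset.card_product]; exact hcard
  obtain ⟨q, hq, q', hq', hne, heq⟩ :=
    Finset.exists_ne_map_eq_of_card_lt_of_maps_to hlt
      (fun q _ => Finset.mem_univ (q.1 + ζ * q.2))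
  simp only [Finset.mem_product] at hq hq'
  have hβ : q'.2 ≠ q.2 := by
    intro h
    apply hne
    have h1 : q.1 = q'.1 := by
      have h2 := heq
      rw [h] at h2
      exact add_right_cancel h2
    exact Prod.ext_iff.mpr ⟨h1, h.symm⟩
  exact ⟨q.1, hq.1, q'.1, hq'.1, q'.2, hq'.2, q.2, hq.2, hβ, by linear_combination heq⟩

theorem eightfold_product_sums_cover (p : ℕ) (hp : p.Prime) (A B : Finset (ZMod p))
    (hcard : p < A.card * B.card)
    (hB : B = -B ∨ B ∩ (-B) = ∅) :
    ∀ x : ZMod p, ∃ a b : Fin 8 → ZMod p,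
      (∀ i, a i ∈ A) ∧ (∀ i, b i ∈ B) ∧ ∑ i, a i * b i = x := by
  classical
  haveI : Fact p.Prime := ⟨hp⟩
  haveI : NeZero p := ⟨hp.ne_zero⟩
  intro x
  have hAp : A.card ≤ p := le_trans (Finset.card_le_univ A) (le_of_eq (ZMod.card p))
  have hBp : B.card ≤ p := le_trans (Finset.card_le_univ B) (le_of_eq (ZMod.card p))
  have hp2 : 2 ≤ p := hp.two_le
  have hA2 : 2 ≤ A.card := by
    rcases Nat.lt_or_ge A.card 2 with h | h
    · exfalso
      have h5 : A.card * B.card ≤ 1 * p := Nat.mul_le_mul (by omega) hBp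
      omega
    · exact h
  have hB2 : 2 ≤ B.card := by
    rcases Nat.lt_or_ge B.card 2 with h | h
    · exfalso
      have h5 : A.card * B.card ≤ p * 1 := Nat.mul_le_mul hAp (by omega)
      omega
    · exact h
  -- choose the good ζ
  set Z : Finset (ZMod p) := Finset.univ \ {0} with hZ
  have hZcard : Z.card = p - 1 := by
    rw [hZ, Finset.card_sdiff_of_subset (by simp), Finset.card_univ, ZMod.card, Finset.card_singleton]
  have hZne : Z.Nonempty := by
    rw [← Finset.card_pos, hZcard]; omega
  obtain ⟨ζ, hζZ, hζmin⟩ := Finset.exists_min_image Z (fun ζ => (Dset p A B ζ).card) hZne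
  have hζ0 : ζ ≠ 0 := by
    rw [hZ] at hζZ
    simp only [Finset.mem_sdiff, Finset.mem_univ, Finset.mem_singleton, true_and] at hζZ
    exact hζZ
  have hmin : (p - 1) * (Dset p A B ζ).card ≤
      (A.card * A.card - A.card) * (B.card * B.card - B.card) := by
    have hstep : Z.card • (Dset p A B ζ).card ≤ ∑ ζ' ∈ Z, (Dset p A B ζ').card :=
      Finset.card_nsmul_le_sum Z _ _ fun ζ' h => hζmin ζ' h
    have hoff : (A.offDiag ×ˢ B.offDiag).card
        = (A.card * A.card - A.card) * (B.card * B.card - B.card) := by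
      rw [Finset.card_product, Finset.offDiag_card _, Finset.offDiag_card _]
    calc (p - 1) * (Dset p A B ζ).card = Z.card • (Dset p A B ζ).card := by
          rw [hZcard, smul_eq_mul]
    _ ≤ ∑ ζ' ∈ Z, (Dset p A B ζ').card := hstep
    _ ≤ (A.offDiag ×ˢ B.offDiag).card := dset_sum_le p A B
    _ = _ := hoff
  -- quality of the sets A + ζ' B
  have quality : ∀ ζ' : ZMod p, (Dset p A B ζ').card ≤ (Dset p A B ζ).card →
      p < 2 * ((A ×ˢ B).image fun q => q.1 + ζ' * q.2).card := by
    intro ζ' hD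
    have hcs := cs_aux (A ×ˢ B) (fun q => q.1 + ζ' * q.2)
    rw [Finset.card_product, energy_split p A B ζ'] at hcs
    set s := ((A ×ˢ B).image fun q => q.1 + ζ' * q.2).card with hs
    set n := A.card * B.card with hn
    set d := (Dset p A B ζ').card with hd
    have hkey := key_numeric p A.card B.card hp2 hA2 hB2 hAp hBp (by omega)
    have h1 : (p - 1) * d ≤ (A.card * A.card - A.card) * (B.card * B.card - B.card) :=
      le_trans (Nat.mul_le_mul_left _ hD) hmin
    have h2 : (p + 1) * ((p - 1) * n + (p - 1) * d) ≤ 2 * n ^ 2 * (p - 1) := by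
      calc (p + 1) * ((p - 1) * n + (p - 1) * d)
          ≤ (p + 1) * ((p - 1) * n +
            (A.card * A.card - A.card) * (B.card * B.card - B.card)) :=
            Nat.mul_le_mul_left _ (Nat.add_le_add_left h1 _)
      _ ≤ 2 * n ^ 2 * (p - 1) := by rw [hn]; exact hkey
    have h3 : (p + 1) * ((p - 1) * (n + d)) ≤ (2 * s) * ((p - 1) * (n + d)) := by
      calc (p + 1) * ((p - 1) * (n + d)) = (p + 1) * ((p - 1) * n + (p - 1) * d) := by ring
      _ ≤ 2 * n ^ 2 * (p - 1) := h2
      _ ≤ 2 * (s * (n + d)) * (p - 1) := by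
          apply Nat.mul_le_mul_right
          apply Nat.mul_le_mul_left
          exact hcs
      _ = (2 * s) * ((p - 1) * (n + d)) := by ring
    have hpos : 0 < (p - 1) * (n + d) := by
      have : 0 < n := by omega
      have : 0 < p - 1 := by omega
      exact Nat.mul_pos (by omega) (by omega)
    have h4 : p + 1 ≤ 2 * s := Nat.le_of_mul_le_mul_right (by
      calc (p + 1) * ((p - 1) * (n + d)) ≤ (2 * s) * ((p - 1) * (n + d)) := h3) hpos
    omega
  -- now branch on the symmetry hypothesis
  rcases hB with hBs | hBa
  · -- symmetric case
    obtain ⟨α₁, hα₁, α₂, hα₂, β₁, hβ₁, β₂, hβ₂, hne, hrep⟩ := pigeon_rep A B hcard ζ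
    have hd : β₁ - β₂ ≠ 0 := sub_ne_zero_of_ne hne
    obtain ⟨u, hu, v, hv, huv⟩ := cover_lemma _ (quality ζ le_rfl) ((β₁ - β₂)⁻¹ * x)
    obtain ⟨⟨α, β⟩, hmem, rfl⟩ := Finset.mem_image.1 hu
    obtain ⟨⟨α', β'⟩, hmem', rfl⟩ := Finset.mem_image.1 hv
    simp only [Finset.mem_product] at hmem hmem'
    have hx : (β₁ - β₂) * ((α + ζ * β) + (α' + ζ * β')) = x := by
      rw [huv]
      exact mul_inv_cancel_left₀ hd x
    have hnegmem : ∀ w ∈ B, -w ∈ B := by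
      intro w hw
      rw [hBs]
      exact Finset.neg_mem_neg hw
    refine ⟨![α, α, α₁, α₂, α', α', α₁, α₂],
            ![β₁, -β₂, β, -β, β₁, -β₂, β', -β'], ?_, ?_, ?_⟩
    · intro i
      fin_cases i <;> first
        | exact hmem.1 | exact hmem'.1 | exact hα₁ | exact hα₂
    · intro i
      fin_cases i <;> first
        | exact hβ₁ | exact hnegmem _ hβ₂ | exact hmem.2 | exact hnegmem _ hmem.2
        | exact hmem'.2 | exact hnegmem _ hmem'.2
    · simp only [Fin.sum_univ_succ, Fin.sum_univ_zero, Matrix.cons_val_zero,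
        Matrix.cons_val_succ, add_zero]
      linear_combination hx + (β + β') * hrep
  · -- antisymmetric case
    have hq2 : p < 2 * ((A ×ˢ B).image fun q => q.1 + (-ζ) * q.2).card :=
      quality (-ζ) (dset_neg_le p A B ζ)
    obtain ⟨u, hu, v, hv, huv⟩ := cover_lemma _ hq2 (0 : ZMod p)
    obtain ⟨⟨α₀, β₀⟩, hm0, rfl⟩ := Finset.mem_image.1 hu
    obtain ⟨⟨α₀', β₀'⟩, hm0', rfl⟩ := Finset.mem_image.1 hv
    simp only [Finset.mem_product] at hm0 hm0'
    have hw : α₀ + α₀' = ζ * (β₀ + β₀') := by linear_combination huv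
    have hwne : β₀ + β₀' ≠ 0 := by
      intro h
      have hb' : β₀' = -β₀ := by linear_combination h
      have h2 : β₀' ∈ -B := hb' ▸ Finset.neg_mem_neg hm0.2
      have h3 : β₀' ∈ B ∩ -B := Finset.mem_inter.2 ⟨hm0'.2, h2⟩
      rw [hBa] at h3
      exact absurd h3 (Finset.notMem_empty _)
    obtain ⟨u', hu', v', hv', huv'⟩ := cover_lemma _ (quality ζ le_rfl) ((β₀ + β₀')⁻¹ * x)
    obtain ⟨⟨α, β⟩, hmem, rfl⟩ := Finset.mem_image.1 hu'
    obtain ⟨⟨α', β'⟩, hmem', rfl⟩ := Finset.mem_image.1 hv'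
    simp only [Finset.mem_product] at hmem hmem'
    have hx : (β₀ + β₀') * ((α + ζ * β) + (α' + ζ * β')) = x := by
      rw [huv']
      exact mul_inv_cancel_left₀ hwne x
    refine ⟨![α, α, α₀, α₀', α', α', α₀, α₀'],
            ![β₀, β₀', β, β, β₀, β₀', β', β'], ?_, ?_, ?_⟩
    · intro i
      fin_cases i <;> first
        | exact hmem.1 | exact hmem'.1 | exact hm0.1 | exact hm0'.1
    · intro i
      fin_cases i <;> first
        | exact hm0.2 | exact hm0'.2 | exact hmem.2 | exact hmem'.2
    · simp only [Fin.sum_univ_succ, Fin.sum_univ_zero, Matrix.cons_val_zero,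
        Matrix.cons_val_succ, add_zero]
      linear_combination hx + (β + β') * hw
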